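/- Let C be a combinatorial class with C(x) > 0 on (0,ρ), expected-size function μ₁(x) = x·C′(x)/C(x) and size standard deviation σ(x) = √(μ₂(x) − μ₁(x)²), where μ₂(x) = (x·C′(x) + x²·C″(x))/C(x). Suppose the size distribution is 'lumpy': μ₁(x) → ∞ and σ(x)/μ₁(x) → 0 as x → ρ⁻. Then for every ε > 0, the probability under the ordinary Boltzmann distribution with parameter x that the sampled structure has size in the interval [(1−ε)·μ₁(x), (1+ε)·μ₁(x)] tends to 1 as x → ρ⁻. -/

import Mathlib

open Filter Set

lemma sum_pow_mul {c : ℕ → ℕ} {ρ : ℝ}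
    (hrad : ∀ y : ℝ, 0 ≤ y → y < ρ → Summable fun n : ℕ => (c n : ℝ) * y ^ n)
    (k : ℕ) {r : ℝ} (hr0 : 0 ≤ r) (hrρ : r < ρ) :
    Summable fun n : ℕ => (n : ℝ) ^ k * (c n : ℝ) * r ^ n := by
  set r' : ℝ := (r + ρ) / 2 with hr'
  have hrr' : r < r' := by simp [hr']; linarith
  have hr'0 : 0 < r' := lt_of_le_of_lt hr0 hrr'
  have hr'ρ : r' < ρ := by simp [hr']; linarith
  have hq : |r / r'| < 1 := by
    rw [abs_of_nonneg (div_nonneg hr0 hr'0.le)]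
    exact (div_lt_one hr'0).2 hrr'
  have hb : Summable fun n : ℕ => (n : ℝ) ^ k * (r / r') ^ n :=
    summable_pow_mul_geometric_of_norm_lt_one k (by rwa [Real.norm_eq_abs])
  obtain ⟨M, hM⟩ := hb.tendsto_atTop_zero.bddAbove_range.imp (fun M hM => hM)
  have hM' : ∀ n : ℕ, (n : ℝ) ^ k * (r / r') ^ n ≤ M := fun n =>
    hM ⟨n, rfl⟩
  refine Summable.of_nonneg_of_le (fun n => by positivity)
    (fun n => ?_) (((hrad r' hr'0.le hr'ρ).mul_left M))
  have hrn : r ^ n = r' ^ n * (r / r') ^ n := by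
    rw [← mul_pow]
    congr 1
    field_simp
  rw [hrn]
  have h1 : (n : ℝ) ^ k * (c n : ℝ) * (r' ^ n * (r / r') ^ n)
      = ((n:ℝ)^k * (r / r')^n) * ((c n : ℝ) * r' ^ n) := by ring
  rw [h1]
  have : ((n:ℝ)^k * (r / r')^n) ≤ M := hM' n
  have hcn : (0:ℝ) ≤ (c n : ℝ) * r' ^ n := by positivity
  calc ((n:ℝ)^k * (r / r')^n) * ((c n : ℝ) * r' ^ n)
      ≤ M * ((c n : ℝ) * r' ^ n) := mul_le_mul_of_nonneg_right this hcn

lemma hasDerivAt_tsum_pow {c : ℕ → ℕ} {ρ : ℝ}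
    (hrad : ∀ y : ℝ, 0 ≤ y → y < ρ → Summable fun n : ℕ => (c n : ℝ) * y ^ n)
    {y : ℝ} (hy : y ∈ Ioo (0:ℝ) ρ) :
    HasDerivAt (fun z : ℝ => ∑' n : ℕ, (c n : ℝ) * z ^ n)
      (∑' n : ℕ, (c n : ℝ) * ((n : ℝ) * y ^ (n - 1))) y := by
  obtain ⟨hy0, hyρ⟩ := hy
  set r : ℝ := (y + ρ) / 2 with hr
  have hyr : y < r := by simp [hr]; linarith
  have hr0 : 0 < r := lt_trans hy0 hyr
  have hrρ : r < ρ := by simp [hr]; linarith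
  have hu : Summable fun n : ℕ => (c n : ℝ) * ((n : ℝ) * r ^ (n - 1)) := by
    refine ((sum_pow_mul hrad 1 hr0.le hrρ).mul_left r⁻¹).congr fun n => ?_
    match n with
    | 0 => simp
    | m + 1 =>
      rw [pow_succ]
      field_simp
      ring
      simp
  refine hasDerivAt_tsum_of_isPreconnected hu (isOpen_Ioo (a := -r) (b := r))
    isPreconnected_Ioo (fun n z _ => (hasDerivAt_pow n z).const_mul ((c n : ℝ)))
    (fun n z hz => ?_) (show y ∈ Ioo (-r) r from ⟨by linarith, hyr⟩)
    (hrad y hy0.le hyρ) (show y ∈ Ioo (-r) r from ⟨by linarith, hyr⟩)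
  have hz' : |z| ≤ r := le_of_lt (abs_lt.2 ⟨hz.1, hz.2⟩)
  rw [Real.norm_eq_abs, abs_mul, abs_mul, abs_pow, Nat.abs_cast, Nat.abs_cast]
  gcongr

lemma hasDerivAt_tsum_pow' {c : ℕ → ℕ} {ρ : ℝ}
    (hrad : ∀ y : ℝ, 0 ≤ y → y < ρ → Summable fun n : ℕ => (c n : ℝ) * y ^ n)
    {y : ℝ} (hy : y ∈ Ioo (0:ℝ) ρ) :
    HasDerivAt (fun z : ℝ => ∑' n : ℕ, (c n : ℝ) * ((n : ℝ) * z ^ (n - 1)))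
      (∑' n : ℕ, (c n : ℝ) * ((n : ℝ) * (((n - 1 : ℕ) : ℝ) * y ^ (n - 2)))) y := by
  obtain ⟨hy0, hyρ⟩ := hy
  set r : ℝ := (y + ρ) / 2 with hr
  have hyr : y < r := by simp [hr]; linarith
  have hr0 : 0 < r := lt_trans hy0 hyr
  have hrρ : r < ρ := by simp [hr]; linarith
  have hu : Summable fun n : ℕ => (c n : ℝ) * ((n : ℝ) * (((n - 1 : ℕ) : ℝ) * r ^ (n - 2))) := by
    refine Summable.of_nonneg_of_le (fun n => by positivity) (fun n => ?_)
      (((sum_pow_mul hrad 2 hr0.le hrρ).mul_left (r⁻¹ * r⁻¹)))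
    match n with
    | 0 => simp
    | 1 => simp; positivity
    | m + 2 =>
      have h2 : (m + 2 : ℕ) - 2 = m := by omega
      have h3 : (m + 2 : ℕ) - 1 = m + 1 := by omega
      rw [h2, h3]
      push_cast
      have hrm : (0:ℝ) ≤ r ^ m := by positivity
      have hc0 : (0:ℝ) ≤ (c (m+2) : ℝ) := Nat.cast_nonneg _
      have hre : r⁻¹ * r⁻¹ * (((m:ℝ)+2)^2 * (c (m+2):ℝ) * r ^ (m+2))
          = ((m:ℝ)+2)^2 * ((c (m+2):ℝ) * r^m) := by
        rw [pow_add]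
        field_simp
      rw [hre]
      nlinarith [mul_nonneg hc0 hrm]
  have key := hasDerivAt_tsum_of_isPreconnected hu (isOpen_Ioo (a := -r) (b := r))
    isPreconnected_Ioo
    (g := fun n z => (c n : ℝ) * ((n : ℝ) * z ^ (n - 1)))
    (g' := fun n z => (c n : ℝ) * ((n : ℝ) * (((n - 1 : ℕ) : ℝ) * z ^ (n - 2))))
    (fun n z _ => ?_) (fun n z hz => ?_)
    (show y ∈ Ioo (-r) r from ⟨by linarith, hyr⟩) ?_
    (show y ∈ Ioo (-r) r from ⟨by linarith, hyr⟩)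
  · exact key
  · -- HasDerivAt for each term
    have h := ((hasDerivAt_pow (n - 1) z).const_mul ((c n : ℝ) * (n : ℝ)))
    have hnn : n - 1 - 1 = n - 2 := by omega
    rw [hnn] at h
    simpa only [mul_assoc] using h
  · -- bound
    have hz' : |z| ≤ r := le_of_lt (abs_lt.2 ⟨hz.1, hz.2⟩)
    rw [Real.norm_eq_abs, abs_mul, abs_mul, abs_mul, abs_pow, Nat.abs_cast, Nat.abs_cast,
      Nat.abs_cast]
    gcongr
  · -- summable at y
    refine ((sum_pow_mul hrad 1 hy0.le hyρ).mul_left y⁻¹).congr fun n => ?_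
    match n with
    | 0 => simp
    | m + 1 =>
      rw [pow_succ]
      field_simp
      ring
      simp

lemma fiber_tsum_ennreal {C : Type*} (size : C → ℕ)
    (hfin : ∀ n : ℕ, {γ : C | size γ = n}.Finite)
    (c : ℕ → ℕ) (hc : ∀ n, c n = Nat.card {γ : C // size γ = n})
    (H : ℕ → ENNReal) :
    ∑' γ : C, H (size γ) = ∑' n : ℕ, (c n : ENNReal) * H n := by
  rw [← Equiv.tsum_eq (Equiv.sigmaFiberEquiv size) (fun γ => H (size γ))]
  have : ∀ p : Σ n : ℕ, {γ : C // size γ = n},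
      H (size ((Equiv.sigmaFiberEquiv size) p)) = H p.1 := by
    rintro ⟨n, γ, hγ⟩; simp [hγ]
  rw [tsum_congr this, ENNReal.tsum_sigma (fun n (_ : {γ : C // size γ = n}) => H n)]
  congr 1
  ext n
  have : Finite {γ : C // size γ = n} := (hfin n).to_subtype
  have : Fintype {γ : C // size γ = n} := Fintype.ofFinite _
  rw [tsum_fintype]
  simp [Finset.sum_const, hc n, Nat.card_eq_fintype_card, nsmul_eq_mul]

lemma fiber_tsum_real {C : Type*} (size : C → ℕ)
    (hfin : ∀ n : ℕ, {γ : C | size γ = n}.Finite)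
    (c : ℕ → ℕ) (hc : ∀ n, c n = Nat.card {γ : C // size γ = n})
    (H : ℕ → ℝ) (hH : ∀ n, 0 ≤ H n)
    (hsum : Summable fun n : ℕ => (c n : ℝ) * H n) :
    Summable (fun γ : C => H (size γ)) ∧
      ∑' γ : C, H (size γ) = ∑' n : ℕ, (c n : ℝ) * H n := by
  have key := fiber_tsum_ennreal size hfin c hc (fun n => ENNReal.ofReal (H n))
  have hrhs : ∑' n : ℕ, (c n : ENNReal) * ENNReal.ofReal (H n)
      = ENNReal.ofReal (∑' n : ℕ, (c n : ℝ) * H n) := by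
    rw [ENNReal.ofReal_tsum_of_nonneg (fun n => mul_nonneg (Nat.cast_nonneg _) (hH n)) hsum]
    congr 1
    ext n
    rw [ENNReal.ofReal_mul (Nat.cast_nonneg _)]
    simp
  rw [hrhs] at key
  have hne : ∑' γ : C, ENNReal.ofReal (H (size γ)) ≠ ⊤ := by
    rw [key]; exact ENNReal.ofReal_ne_top
  have hsC : Summable (fun γ : C => H (size γ)) := by
    have := ENNReal.summable_toReal hne
    refine this.congr fun γ => ?_
    rw [ENNReal.toReal_ofReal (hH _)]
  refine ⟨hsC, ?_⟩
  have h1 : ENNReal.ofReal (∑' γ : C, H (size γ))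
      = ∑' γ : C, ENNReal.ofReal (H (size γ)) :=
    ENNReal.ofReal_tsum_of_nonneg (fun γ => hH _) hsC
  have h2 := h1.trans key
  have hnn1 : 0 ≤ ∑' γ : C, H (size γ) := tsum_nonneg fun γ => hH _
  have hnn2 : 0 ≤ ∑' n : ℕ, (c n : ℝ) * H n :=
    tsum_nonneg fun n => mul_nonneg (Nat.cast_nonneg _) (hH n)
  exact (ENNReal.ofReal_eq_ofReal_iff hnn1 hnn2).1 h2

set_option maxHeartbeats 1000000 in
/-- If the size distribution is "lumpy" (`μ₁(x) → ∞` and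
`σ(x)/μ₁(x) → 0` as `x → ρ⁻`), then for every `ε > 0` the Boltzmann(`x`)
probability that the sampled structure has size in
`[(1−ε)·μ₁(x), (1+ε)·μ₁(x)]` tends to `1` as `x → ρ⁻`. -/
theorem lumpy_concentration
    (C : Type*) [Countable C] (size : C → ℕ)
    (hfin : ∀ n : ℕ, {γ : C | size γ = n}.Finite)
    (c : ℕ → ℕ) (hc : ∀ n, c n = Nat.card {γ : C // size γ = n})
    (ρ : ℝ) (hρ : 0 < ρ)
    (hrad : ∀ y : ℝ, 0 ≤ y → y < ρ → Summable fun n : ℕ => (c n : ℝ) * y ^ n)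
    (f : ℝ → ℝ) (hf : ∀ y : ℝ, f y = ∑' n : ℕ, (c n : ℝ) * y ^ n)
    (hpos : ∀ y ∈ Set.Ioo (0 : ℝ) ρ, 0 < f y)
    (μ₁ μ₂ σ : ℝ → ℝ)
    (hμ₁ : ∀ y : ℝ, μ₁ y = y * deriv f y / f y)
    (hμ₂ : ∀ y : ℝ, μ₂ y = (y * deriv f y + y ^ 2 * deriv (deriv f) y) / f y)
    (hσ : ∀ y : ℝ, σ y = Real.sqrt (μ₂ y - μ₁ y ^ 2))
    (hmean : Filter.Tendsto μ₁ (nhdsWithin ρ (Set.Iio ρ)) Filter.atTop)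
    (hlumpy : Filter.Tendsto (fun y => σ y / μ₁ y) (nhdsWithin ρ (Set.Iio ρ)) (nhds 0)) :
    ∀ ε : ℝ, 0 < ε →
      Filter.Tendsto
        (fun y : ℝ => ∑' γ : C,
          Set.indicator
            {γ : C | (1 - ε) * μ₁ y ≤ (size γ : ℝ) ∧ (size γ : ℝ) ≤ (1 + ε) * μ₁ y}
            (fun γ : C => y ^ size γ / f y) γ)
        (nhdsWithin ρ (Set.Iio ρ)) (nhds 1) := by
  intro ε hε
  classical
  have hfun : f = fun z : ℝ => ∑' n : ℕ, (c n : ℝ) * z ^ n := funext hf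
  set l := nhdsWithin ρ (Set.Iio ρ) with hl
  set Q : ℝ → ℝ := fun y => ∑' γ : C,
      Set.indicator
        {γ : C | (1 - ε) * μ₁ y ≤ (size γ : ℝ) ∧ (size γ : ℝ) ≤ (1 + ε) * μ₁ y}
        (fun γ : C => y ^ size γ / f y) γ with hQ
  set B : ℝ → ℝ := fun y => (σ y / μ₁ y) ^ 2 / ε ^ 2 with hB
  have hBlim : Tendsto B l (nhds 0) := by
    have h1 : Tendsto (fun y => (σ y / μ₁ y) ^ 2) l (nhds 0) := by
      have := hlumpy.pow 2
      simpa using this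
    have := h1.div_const (ε ^ 2)
    simpa using this
  have h1lim : Tendsto (fun y => 1 - B y) l (nhds 1) := by
    have := tendsto_const_nhds (α := ℝ) (x := (1:ℝ)) (f := l) |>.sub hBlim
    simpa using this
  -- eventual facts
  have E1 : ∀ᶠ y in l, y ∈ Ioo (0:ℝ) ρ :=
    Ioo_mem_nhdsLT_of_mem ⟨hρ, le_refl ρ⟩
  have E2 : ∀ᶠ y in l, 1 ≤ μ₁ y := hmean.eventually_ge_atTop 1
  have hE : ∀ᶠ y in l, 1 - B y ≤ Q y ∧ Q y ≤ 1 := by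
    filter_upwards [E1, E2] with y hy hm1
    obtain ⟨hy0, hyρ⟩ := hy
    have hfy : 0 < f y := hpos y ⟨hy0, hyρ⟩
    set m : ℝ := μ₁ y with hm
    have hm0 : 0 < m := lt_of_lt_of_le one_pos hm1
    -- summability
    have S0 : Summable fun n : ℕ => (c n : ℝ) * y ^ n := hrad y hy0.le hyρ
    have SA1 : Summable fun n : ℕ => (n : ℝ) ^ 1 * (c n : ℝ) * y ^ n :=
      sum_pow_mul hrad 1 hy0.le hyρ
    have SA2 : Summable fun n : ℕ => (n : ℝ) ^ 2 * (c n : ℝ) * y ^ n :=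
      sum_pow_mul hrad 2 hy0.le hyρ
    have hA0 : f y = ∑' n : ℕ, (c n : ℝ) * y ^ n := hf y
    set A0 : ℝ := ∑' n : ℕ, (c n : ℝ) * y ^ n with hA0d
    set A1 : ℝ := ∑' n : ℕ, (n : ℝ) ^ 1 * (c n : ℝ) * y ^ n with hA1d
    set A2 : ℝ := ∑' n : ℕ, (n : ℝ) ^ 2 * (c n : ℝ) * y ^ n with hA2d
    -- first derivative
    have hD1 : HasDerivAt f (∑' n : ℕ, (c n : ℝ) * ((n : ℝ) * y ^ (n - 1))) y := by
      rw [hfun]; exact hasDerivAt_tsum_pow hrad ⟨hy0, hyρ⟩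
    have hderiv1 : deriv f y = ∑' n : ℕ, (c n : ℝ) * ((n : ℝ) * y ^ (n - 1)) := hD1.deriv
    have hyd1 : y * deriv f y = A1 := by
      rw [hderiv1, ← tsum_mul_left, hA1d]
      refine tsum_congr fun n => ?_
      match n with
      | 0 => simp
      | k + 1 =>
        simp only [Nat.add_sub_cancel]
        push_cast
        rw [pow_succ]
        ring
    -- second derivative
    have heqOn : Set.EqOn (deriv f)
        (fun z : ℝ => ∑' n : ℕ, (c n : ℝ) * ((n : ℝ) * z ^ (n - 1))) (Ioo (0:ℝ) ρ) := by
      intro z hz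
      have : HasDerivAt f (∑' n : ℕ, (c n : ℝ) * ((n : ℝ) * z ^ (n - 1))) z := by
        rw [hfun]; exact hasDerivAt_tsum_pow hrad hz
      exact this.deriv
    have hev : deriv f =ᶠ[nhds y]
        (fun z : ℝ => ∑' n : ℕ, (c n : ℝ) * ((n : ℝ) * z ^ (n - 1))) :=
      Filter.eventuallyEq_of_mem (isOpen_Ioo.mem_nhds ⟨hy0, hyρ⟩) heqOn
    have hD2 : HasDerivAt (deriv f)
        (∑' n : ℕ, (c n : ℝ) * ((n : ℝ) * (((n - 1 : ℕ) : ℝ) * y ^ (n - 2)))) y :=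
      (hev.hasDerivAt_iff).2 (hasDerivAt_tsum_pow' hrad ⟨hy0, hyρ⟩)
    have hderiv2 : deriv (deriv f) y
        = ∑' n : ℕ, (c n : ℝ) * ((n : ℝ) * (((n - 1 : ℕ) : ℝ) * y ^ (n - 2))) := hD2.deriv
    -- A2' and its summability
    have SA2' : Summable fun n : ℕ => (n : ℝ) * (((n - 1 : ℕ) : ℝ)) * ((c n : ℝ) * y ^ n) := by
      refine Summable.of_nonneg_of_le (fun n => by positivity) (fun n => ?_) SA2
      have h1 : (((n - 1 : ℕ) : ℝ)) ≤ (n : ℝ) := by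
        exact_mod_cast Nat.sub_le n 1
      have h2 : (0:ℝ) ≤ (c n : ℝ) * y ^ n := by positivity
      calc (n : ℝ) * (((n - 1 : ℕ) : ℝ)) * ((c n : ℝ) * y ^ n)
          ≤ (n : ℝ) * (n : ℝ) * ((c n : ℝ) * y ^ n) := by
            refine mul_le_mul_of_nonneg_right ?_ h2
            exact mul_le_mul_of_nonneg_left h1 (Nat.cast_nonneg _)
        _ = (n : ℝ) ^ 2 * (c n : ℝ) * y ^ n := by ring
    have hyd2 : y ^ 2 * deriv (deriv f) y
        = ∑' n : ℕ, (n : ℝ) * (((n - 1 : ℕ) : ℝ)) * ((c n : ℝ) * y ^ n) := by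
      rw [hderiv2, ← tsum_mul_left]
      refine tsum_congr fun n => ?_
      match n with
      | 0 => simp
      | 1 => simp
      | k + 2 =>
        have e1 : (k + 2 : ℕ) - 2 = k := by omega
        have e2 : (k + 2 : ℕ) - 1 = k + 1 := by omega
        rw [e1, e2]
        push_cast
        ring
    -- moment identities
    have hmom2 : μ₂ y * A0 = A2 := by
      have hsum12 : A1 + (∑' n : ℕ, (n : ℝ) * (((n - 1 : ℕ) : ℝ)) * ((c n : ℝ) * y ^ n)) = A2 := by
        rw [hA1d, ← Summable.tsum_add SA1 SA2', hA2d]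
        refine tsum_congr fun n => ?_
        match n with
        | 0 => simp
        | k + 1 =>
          have e2 : (k + 1 : ℕ) - 1 = k := by omega
          rw [e2]
          push_cast
          ring
      rw [hμ₂ y, hA0, div_mul_cancel₀ _ (ne_of_gt (hA0 ▸ hfy)), hyd1, hyd2]
      exact hsum12
    have hmom1 : m * A0 = A1 := by
      rw [hm, hμ₁ y, hA0, div_mul_cancel₀ _ (ne_of_gt (hA0 ▸ hfy)), hyd1]
    -- variance
    have SVterm : Summable fun n : ℕ => ((n : ℝ) - m) ^ 2 * ((c n : ℝ) * y ^ n) := by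
      refine (((SA2.sub (SA1.mul_left (2*m))).add (S0.mul_left (m^2)))).congr fun n => ?_
      ring
    set V : ℝ := ∑' n : ℕ, ((n : ℝ) - m) ^ 2 * ((c n : ℝ) * y ^ n) with hVd
    have hV : V = A2 - 2*m*A1 + m^2*A0 := by
      rw [hVd]
      have he : (fun n : ℕ => ((n : ℝ) - m) ^ 2 * ((c n : ℝ) * y ^ n))
          = fun n : ℕ => ((n : ℝ) ^ 2 * (c n : ℝ) * y ^ n
              - 2*m*((n : ℝ) ^ 1 * (c n : ℝ) * y ^ n)) + m^2*((c n : ℝ) * y ^ n) :=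
        funext fun n => by ring
      rw [he, Summable.tsum_add (SA2.sub (SA1.mul_left (2*m))) (S0.mul_left (m^2)),
        Summable.tsum_sub SA2 (SA1.mul_left (2*m)), tsum_mul_left, tsum_mul_left]
    have hVnn : 0 ≤ V := tsum_nonneg fun n => by positivity
    have hA0pos : 0 < A0 := hA0 ▸ hfy
    have hVar : V = (μ₂ y - m^2) * A0 := by
      rw [hV, ← hmom1, ← hmom2]; ring
    have hvar_nonneg : 0 ≤ μ₂ y - m ^ 2 := by
      nlinarith [hVnn, hA0pos, hVar]
    have hσ2 : σ y ^ 2 = μ₂ y - m ^ 2 := by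
      rw [hσ y, Real.sq_sqrt]
      exact hvar_nonneg
    -- good and bad sums
    set P : ℕ → Prop := fun n => (1 - ε) * m ≤ (n : ℝ) ∧ (n : ℝ) ≤ (1 + ε) * m with hP
    set good : ℕ → ℝ := fun n => if P n then (c n : ℝ) * y ^ n else 0 with hgood
    set bad : ℕ → ℝ := fun n => if P n then 0 else (c n : ℝ) * y ^ n with hbad
    have Sgood : Summable good := by
      refine Summable.of_nonneg_of_le (fun n => ?_) (fun n => ?_) S0
      · rw [hgood]; dsimp only; split
        · positivity
        · exact le_rfl
      · rw [hgood]; dsimp only; split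
        · exact le_rfl
        · positivity
    have Sbad : Summable bad := by
      refine Summable.of_nonneg_of_le (fun n => ?_) (fun n => ?_) S0
      · rw [hbad]; dsimp only; split
        · exact le_rfl
        · positivity
      · rw [hbad]; dsimp only; split
        · positivity
        · exact le_rfl
    have hsplit : (∑' n, good n) + (∑' n, bad n) = A0 := by
      rw [← Summable.tsum_add Sgood Sbad, hA0d]
      refine tsum_congr fun n => ?_
      rw [hgood, hbad]; dsimp only; split <;> simp
    have hKpos : 0 < (ε * m) ^ 2 := by positivity
    have hbadle : (∑' n, bad n) ≤ ((ε * m) ^ 2)⁻¹ * V := by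
      rw [hVd, ← tsum_mul_left]
      refine Summable.tsum_le_tsum (fun n => ?_) Sbad (SVterm.mul_left _)
      rw [hbad]; dsimp only; split
      · positivity
      · rename_i hPn
        simp only [hP] at hPn; push_neg at hPn
        have hεm : (0:ℝ) < ε * m := mul_pos hε hm0
        have hsq : (ε * m) ^ 2 ≤ ((n : ℝ) - m) ^ 2 := by
          rcases le_or_gt ((1 - ε) * m) ((n : ℝ)) with h | h
          · have h' := hPn h
            nlinarith [mul_pos (show (0:ℝ) < ((n:ℝ) - m) - ε * m by linarith)
              (show (0:ℝ) < ((n:ℝ) - m) + ε * m by linarith)]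
          · nlinarith [mul_pos (show (0:ℝ) < (m - (n:ℝ)) - ε * m by linarith)
              (show (0:ℝ) < (m - (n:ℝ)) + ε * m by linarith)]
        have h2 : (0:ℝ) ≤ (c n : ℝ) * y ^ n := by positivity
        calc (c n : ℝ) * y ^ n
            = ((ε * m) ^ 2)⁻¹ * ((ε * m) ^ 2 * ((c n : ℝ) * y ^ n)) := by
              field_simp
          _ ≤ ((ε * m) ^ 2)⁻¹ * (((n : ℝ) - m) ^ 2 * ((c n : ℝ) * y ^ n)) := by gcongr
    have hbadnn : 0 ≤ ∑' n, bad n := by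
      refine tsum_nonneg fun n => ?_
      rw [hbad]; dsimp only; split
      · exact le_rfl
      · positivity
    -- identify Q y
    have hHs : Summable fun n : ℕ => (c n : ℝ) * (if P n then y ^ n / f y else 0) := by
      refine (Sgood.div_const (f y)).congr fun n => ?_
      rw [hgood]; dsimp only; split <;> simp [mul_div_assoc]
    obtain ⟨hsC, heqC⟩ := fiber_tsum_real size hfin c hc
      (fun n => if P n then y ^ n / f y else 0)
      (fun n => by
        split
        · positivity
        · exact le_rfl) hHs
    have hQy : Q y = 1 - (∑' n, bad n) / A0 := by
      have step1 : Q y = ∑' γ : C, (fun n : ℕ => if P n then y ^ n / f y else 0) (size γ) := by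
        rw [hQ]
        refine tsum_congr fun γ => ?_
        rw [Set.indicator_apply]
        exact if_congr Iff.rfl rfl rfl
      have step2 : (∑' n : ℕ, (c n : ℝ) * (if P n then y ^ n / f y else 0))
          = (∑' n, good n) / f y := by
        rw [← tsum_div_const]
        refine tsum_congr fun n => ?_
        rw [hgood]; dsimp only; split <;> simp [mul_div_assoc]
      rw [step1, heqC, step2, hA0]
      have : (∑' n, good n) = A0 - (∑' n, bad n) := by linarith [hsplit]
      rw [this, sub_div, div_self (ne_of_gt hA0pos)]
    have hεne : ε ≠ 0 := ne_of_gt hε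
    have hmne : m ≠ 0 := ne_of_gt hm0
    have hBe : B y = ((ε * m) ^ 2)⁻¹ * (σ y ^ 2) := by
      rw [hB]
      dsimp only
      rw [← hm]
      rw [div_pow, div_div, inv_mul_eq_div]
      congr 1
      ring
    have hfrac : (∑' n, bad n) / A0 ≤ B y := by
      calc (∑' n, bad n) / A0 ≤ (((ε * m) ^ 2)⁻¹ * V) / A0 := by gcongr
        _ = ((ε * m) ^ 2)⁻¹ * (μ₂ y - m ^ 2) := by
            rw [hVar, mul_div_assoc, mul_div_assoc, div_self (ne_of_gt hA0pos), mul_one]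
        _ = B y := by rw [hBe, hσ2]
    constructor
    · rw [hQy]
      linarith [hfrac]
    · rw [hQy]
      have : 0 ≤ (∑' n, bad n) / A0 := div_nonneg hbadnn hA0pos.le
      linarith
  exact tendsto_of_tendsto_of_tendsto_of_le_of_le' h1lim tendsto_const_nhds
    (hE.mono fun y h => h.1) (hE.mono fun y h => h.2)
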